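/- Among the 2^100 binary words of length 100, the number of words in which HH occurrences strictly exceed HT occurrences is strictly less than the number in which HT occurrences strictly exceed HH occurrences. -/

import Mathlib

/-- Number of occurrences of the two-letter pattern `p q` in the word `w`
(indices `i` with `w i = p` and `w (i+1) = q`). `H = true`, `T = false`. -/
def cnt {n : ℕ} (w : Fin n → Bool) (p q : Bool) : ℕ :=
  (Finset.univ.filter (fun i : Fin n =>
    ∃ j : Fin n, (j : ℕ) = (i : ℕ) + 1 ∧ w i = p ∧ w j = q)).card

section Aux

lemma univ_eq_insert_last (n : ℕ) :
    (Finset.univ : Finset (Fin (n+1)))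
      = insert (Fin.last n) (Finset.univ.map Fin.castSuccEmb) := by
  ext i
  simp only [Finset.mem_univ, Finset.mem_insert, Finset.mem_map, true_iff]
  rcases Fin.eq_castSucc_or_eq_last i with ⟨j, rfl⟩ | rfl
  · exact Or.inr ⟨j, trivial, rfl⟩
  · exact Or.inl rfl

lemma last_not_mem_map (n : ℕ) :
    Fin.last n ∉ (Finset.univ : Finset (Fin n)).map Fin.castSuccEmb := by
  simp only [Finset.mem_map, Finset.mem_univ, true_and]
  rintro ⟨j, hj⟩
  exact absurd (congrArg Fin.val hj) (by simp [Fin.last]; omega)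

lemma card_filter_fin (n : ℕ) (P : Fin (n+1) → Prop) [DecidablePred P]
    (h : ¬ P (Fin.last n)) :
    (Finset.univ.filter P).card
      = (Finset.univ.filter (fun i : Fin n => P i.castSucc)).card := by
  rw [univ_eq_insert_last, Finset.filter_insert, if_neg h, Finset.filter_map,
    Finset.card_map]
  rfl

lemma cnt_eq (n : ℕ) (w : Fin (n+1) → Bool) (p q : Bool) :
    cnt w p q = (Finset.univ.filter (fun i : Fin n =>
      w i.castSucc = p ∧ w i.succ = q)).card := by
  unfold cnt
  rw [card_filter_fin]
  · apply congrArg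
    apply Finset.filter_congr
    intro i _
    constructor
    · rintro ⟨j, hj, h1, h2⟩
      have : j = i.succ := by
        apply Fin.ext
        simp [hj]
      subst this
      exact ⟨h1, h2⟩
    · rintro ⟨h1, h2⟩
      exact ⟨i.succ, by simp, h1, h2⟩
  · rintro ⟨j, hj, -, -⟩
    have := j.isLt
    simp [Fin.last] at hj
    omega

lemma cnt_le (n : ℕ) (w : Fin (n+1) → Bool) (p q : Bool) : cnt w p q ≤ n := by
  rw [cnt_eq]
  calc _ ≤ (Finset.univ : Finset (Fin n)).card := Finset.card_filter_le _ _
  _ = n := by simp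

lemma cnt_snoc (n : ℕ) (v : Fin (n+1) → Bool) (b p q : Bool) :
    cnt (Fin.snoc v b) p q
      = cnt v p q + (if v (Fin.last n) = p ∧ b = q then 1 else 0) := by
  rw [cnt_eq n v p q, cnt_eq (n+1) (Fin.snoc v b) p q]
  rw [univ_eq_insert_last n, Finset.filter_insert]
  have hlast : (Fin.snoc v b : Fin (n+2) → Bool) (Fin.last n).castSucc = v (Fin.last n) :=
    by simp
  have hlast2 : (Fin.snoc v b : Fin (n+2) → Bool) (Fin.last n).succ = b := by
    rw [Fin.succ_last]; simp
  have hmap : (Finset.filter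
      (fun i : Fin (n+1) => (Fin.snoc v b : Fin (n+2) → Bool) i.castSucc = p ∧
        (Fin.snoc v b : Fin (n+2) → Bool) i.succ = q)
      (Finset.univ.map Fin.castSuccEmb)).card
      = (Finset.univ.filter (fun i : Fin n => v i.castSucc = p ∧ v i.succ = q)).card := by
    rw [Finset.filter_map, Finset.card_map]
    apply congrArg
    apply Finset.filter_congr
    intro i _
    simp only [Function.comp, Fin.coe_castSuccEmb]
    rw [show (i.castSucc : Fin (n+1)).castSucc = (i.castSucc : Fin n.succ).castSucc from rfl]
    rw [Fin.snoc_castSucc, Fin.succ_castSucc, Fin.snoc_castSucc]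
  by_cases hc : v (Fin.last n) = p ∧ b = q
  · rw [if_pos (by rw [hlast, hlast2]; exact hc), if_pos hc,
      Finset.card_insert_of_notMem (fun hmem => last_not_mem_map n (Finset.mem_of_mem_filter _ hmem)),
      hmap]
  · rw [if_neg (by rw [hlast, hlast2]; exact hc), if_neg hc, hmap, Nat.add_zero]

/-- The difference (#HT - #HH). -/
def dval {n : ℕ} (w : Fin n → Bool) : ℤ := (cnt w true false : ℤ) - cnt w true true

/-- Number of words of length `n+1` with last letter `b` and difference `d`. -/
def cd (n : ℕ) (b : Bool) (d : ℤ) : ℕ :=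
  (Finset.univ.filter (fun w : Fin (n+1) → Bool =>
    w (Fin.last n) = b ∧ dval w = d)).card

lemma abs_dval_le (n : ℕ) (w : Fin (n+1) → Bool) : -(n:ℤ) ≤ dval w ∧ dval w ≤ n := by
  have h1 := cnt_le n w true false
  have h2 := cnt_le n w true true
  unfold dval
  omega

lemma cd_eq_zero (n : ℕ) (b : Bool) (d : ℤ) (hd : d < -(n:ℤ) ∨ (n:ℤ) < d) :
    cd n b d = 0 := by
  unfold cd
  rw [Finset.card_eq_zero, Finset.filter_eq_empty_iff]
  rintro w - ⟨-, hw⟩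
  have := abs_dval_le n w
  omega

lemma dval_snoc (n : ℕ) (v : Fin (n+1) → Bool) (b : Bool) :
    dval (Fin.snoc v b)
      = dval v + (if v (Fin.last n) = true then (if b then -1 else 1) else 0) := by
  unfold dval
  rw [cnt_snoc, cnt_snoc]
  cases hb : b <;> cases hv : v (Fin.last n) <;> simp [hv] <;> push_cast <;> ring

lemma cnt_zero (w : Fin 1 → Bool) (p q : Bool) : cnt w p q = 0 := by
  unfold cnt
  rw [Finset.card_eq_zero, Finset.filter_eq_empty_iff]
  rintro i - ⟨j, hj, -⟩
  have := j.isLt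
  omega

lemma cd_zero (b : Bool) (d : ℤ) : cd 0 b d = if d = 0 then 1 else 0 := by
  unfold cd
  have hd : ∀ w : Fin 1 → Bool, dval w = 0 := by
    intro w; unfold dval; rw [cnt_zero, cnt_zero]; simp
  by_cases h : d = 0
  · subst h
    rw [if_pos rfl, Finset.card_eq_one]
    refine ⟨fun _ => b, ?_⟩
    ext w
    simp only [Finset.mem_filter, Finset.mem_univ, true_and, Finset.mem_singleton, hd]
    constructor
    · rintro ⟨hw, -⟩
      funext i
      rw [show i = Fin.last 0 from Fin.ext (by omega), hw]
    · rintro rfl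
      simp
  · rw [if_neg h, Finset.card_eq_zero, Finset.filter_eq_empty_iff]
    rintro w - ⟨-, hw⟩
    rw [hd] at hw
    exact h hw.symm

lemma cd_succ (n : ℕ) (b : Bool) (d : ℤ) :
    cd (n+1) b d = cd n false d + cd n true (d + if b then 1 else -1) := by
  have key : cd (n+1) b d
      = (Finset.univ.filter (fun v : Fin (n+1) → Bool => dval (Fin.snoc v b) = d)).card := by
    unfold cd
    apply Finset.card_nbij' (fun w => Fin.init w) (fun v => Fin.snoc v b)
    · rintro w hw
      simp only [Finset.mem_coe, Finset.mem_filter, Finset.mem_univ, true_and] at hw ⊢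
      rw [show (Fin.snoc (Fin.init w) b : Fin (n+2) → Bool) = w from by
        rw [← hw.1]; exact Fin.snoc_init_self w]
      exact hw.2
    · rintro v hv
      simp only [Finset.mem_coe, Finset.mem_filter, Finset.mem_univ, true_and] at hv ⊢
      exact ⟨Fin.snoc_last _ _, hv⟩
    · rintro w hw
      simp only [Finset.mem_coe, Finset.mem_filter, Finset.mem_univ, true_and] at hw
      rw [← hw.1]; exact Fin.snoc_init_self w
    · rintro v hv
      exact Fin.init_snoc _ _
  rw [key, ← Finset.card_filter_add_card_filter_not
    (p := fun v : Fin (n+1) → Bool => v (Fin.last n) = true), Finset.filter_filter,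
    Finset.filter_filter]
  have h1 : (Finset.univ.filter (fun v : Fin (n+1) → Bool =>
      dval (Fin.snoc v b) = d ∧ v (Fin.last n) = true)).card
      = cd n true (d + if b then 1 else -1) := by
    unfold cd
    apply congrArg
    apply Finset.filter_congr
    intro v _
    rw [dval_snoc]
    cases hv : v (Fin.last n) <;> cases b <;> simp [hv] <;> omega
  have h2 : (Finset.univ.filter (fun v : Fin (n+1) → Bool =>
      dval (Fin.snoc v b) = d ∧ ¬ v (Fin.last n) = true)).card = cd n false d := by
    unfold cd
    apply congrArg
    apply Finset.filter_congr
    intro v _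
    rw [dval_snoc]
    cases hv : v (Fin.last n) <;> cases b <;> simp [hv] <;> omega
  rw [h1, h2, Nat.add_comm]

/-- One step of the DP: index `k` encodes difference `d = k - 100`. -/
def stepDP (s : List ℕ × List ℕ) : List ℕ × List ℕ :=
  (List.zipWith (· + ·) s.1 (0 :: s.2), List.zipWith (· + ·) s.1 (s.2.tail ++ [0]))

def initDP : List ℕ × List ℕ :=
  (List.replicate 100 0 ++ 1 :: List.replicate 100 0,
   List.replicate 100 0 ++ 1 :: List.replicate 100 0)

def stDP (n : ℕ) : List ℕ × List ℕ := stepDP^[n] initDP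

lemma bridge : ∀ n : ℕ, n ≤ 100 →
    stDP n = ((List.range 201).map (fun k : ℕ => cd n false ((k:ℤ) - 100)),
              (List.range 201).map (fun k : ℕ => cd n true ((k:ℤ) - 100))) := by
  intro n
  induction n with
  | zero =>
    intro _
    show initDP = _
    have he : ∀ b : Bool, (List.range 201).map (fun k : ℕ => cd 0 b ((k:ℤ) - 100))
        = List.replicate 100 0 ++ 1 :: List.replicate 100 0 := by
      intro b
      simp only [cd_zero]
      apply List.ext_getElem
      · simp only [List.length_map, List.length_range, List.length_append,
          List.length_replicate, List.length_cons]
      · intro k h1 h2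
        simp only [List.getElem_map, List.getElem_range]
        rcases Nat.lt_trichotomy k 100 with hk | hk | hk
        · rw [List.getElem_append_left (by simpa using hk), List.getElem_replicate,
            if_neg (by omega)]
        · subst hk
          rw [List.getElem_append_right (by simp), if_pos (by omega)]
          simp
        · rw [if_neg (show ¬((k:ℤ) - 100 = 0) by omega),
            List.getElem_append_right (by simp only [List.length_replicate]; omega)]
          simp only [List.length_replicate]
          have hk3 : k < 201 := by
            simp only [List.length_append, List.length_replicate, List.length_cons] at h2
            omega
          obtain ⟨m, hm⟩ : ∃ m, k - 100 = m + 1 := ⟨k - 101, by omega⟩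
          have hm2 : m < 100 := by omega
          simp only [hm, List.getElem_cons_succ, List.getElem_replicate]
    exact Prod.ext (he false).symm (he true).symm
  | succ n ih =>
    intro hn
    have ihn := ih (by omega)
    rw [stDP, Function.iterate_succ_apply', ← stDP, ihn]
    unfold stepDP
    simp only [Prod.mk.injEq]
    constructor
    · -- false component
      apply List.ext_getElem
      · simp [List.length_zipWith]
      · intro k h1 h2
        simp only [List.length_zipWith, List.length_map, List.length_range,
          List.length_cons] at h1
        have hk : k < 201 := by omega
        rw [List.getElem_zipWith, List.getElem_map, List.getElem_range,
          List.getElem_map, List.getElem_range, cd_succ]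
        simp only [Bool.false_eq_true, if_false]
        congr 1
        rcases Nat.eq_zero_or_pos k with rfl | hk0
        · rw [List.getElem_cons_zero]
          exact (cd_eq_zero n true _ (by omega)).symm
        · obtain ⟨m, hm⟩ : ∃ m, k = m + 1 := ⟨k - 1, by omega⟩
          subst hm
          rw [List.getElem_cons_succ, List.getElem_map, List.getElem_range]
          congr 1
          push_cast
          ring
    · -- true component
      apply List.ext_getElem
      · simp [List.length_zipWith]
      · intro k h1 h2
        simp only [List.length_zipWith, List.length_map, List.length_range,
          List.length_append, List.length_tail, List.length_cons] at h1
        have hk : k < 201 := by omega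
        rw [List.getElem_zipWith, List.getElem_map, List.getElem_range,
          List.getElem_map, List.getElem_range, cd_succ]
        simp only [if_true]
        congr 1
        rcases Nat.lt_or_ge k 200 with hk2 | hk2
        · rw [List.getElem_append_left (by
              simp only [List.length_tail, List.length_map, List.length_range]; omega),
            List.getElem_tail, List.getElem_map, List.getElem_range]
          congr 1
          push_cast
          ring
        · have hk200 : k = 200 := by omega
          subst hk200
          rw [List.getElem_append_right (by
            simp only [List.length_tail, List.length_map, List.length_range]; omega)]
          simp only [List.length_tail, List.length_map, List.length_range]
          have h0 : ([0] : List ℕ)[200 - (201 - 1)] = 0 := rfl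
          rw [h0]
          exact (cd_eq_zero n true _ (by omega)).symm

/-- The embedding `k ↦ k - 100 : ℕ → ℤ`. -/
def embD : ℕ ↪ ℤ := ⟨fun k => (k : ℤ) - 100, fun a b h => by dsimp at h; omega⟩

lemma card_filter_eq_sum (P : ℤ → Prop) [DecidablePred P] :
    (Finset.univ.filter (fun w : Fin 100 → Bool => P (dval w))).card
      = ∑ k ∈ Finset.range 201, (if P ((k:ℤ) - 100) then
          cd 99 false ((k:ℤ) - 100) + cd 99 true ((k:ℤ) - 100) else 0) := by
  have hmem : ∀ w ∈ Finset.univ.filter (fun w : Fin 100 → Bool => P (dval w)),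
      ((w (Fin.last 99), dval w) : Bool × ℤ)
        ∈ (Finset.univ : Finset Bool) ×ˢ ((Finset.range 201).map embD) := by
    intro w _
    have hb := abs_dval_le 99 w
    refine Finset.mem_product.2 ⟨Finset.mem_univ _, Finset.mem_map.2
      ⟨(dval w + 100).toNat, Finset.mem_range.2 (by omega), ?_⟩⟩
    show ((dval w + 100).toNat : ℤ) - 100 = dval w
    omega
  rw [Finset.card_eq_sum_card_fiberwise hmem]
  have hfib : ∀ y : Bool × ℤ,
      ((Finset.univ.filter (fun w : Fin 100 → Bool => P (dval w))).filter
        (fun w => ((w (Fin.last 99), dval w) : Bool × ℤ) = y)).card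
      = if P y.2 then cd 99 y.1 y.2 else 0 := by
    rintro ⟨yb, yd⟩
    rw [Finset.filter_filter]
    by_cases hP : P yd
    · rw [if_pos hP]
      unfold cd
      apply congrArg
      apply Finset.filter_congr
      intro w _
      simp only [Prod.mk.injEq]
      constructor
      · rintro ⟨-, h1, h2⟩; exact ⟨h1, h2⟩
      · rintro ⟨h1, h2⟩; exact ⟨by rw [h2]; exact hP, h1, h2⟩
    · rw [if_neg hP, Finset.card_eq_zero, Finset.filter_eq_empty_iff]
      rintro w - ⟨hp, heq⟩
      have h2 : dval w = yd := by simp only [Prod.mk.injEq] at heq; exact heq.2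
      rw [h2] at hp
      exact hP hp
  calc ∑ y ∈ (Finset.univ : Finset Bool) ×ˢ ((Finset.range 201).map embD),
        ((Finset.univ.filter (fun w : Fin 100 → Bool => P (dval w))).filter
          (fun w => ((w (Fin.last 99), dval w) : Bool × ℤ) = y)).card
      = ∑ y ∈ (Finset.univ : Finset Bool) ×ˢ ((Finset.range 201).map embD),
          (if P y.2 then cd 99 y.1 y.2 else 0) := by
        apply Finset.sum_congr rfl
        intro y _
        exact hfib y
    _ = ∑ b : Bool, ∑ d ∈ (Finset.range 201).map embD,
          (if P d then cd 99 b d else 0) := Finset.sum_product _ _ _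
    _ = ∑ b : Bool, ∑ k ∈ Finset.range 201,
          (if P ((k:ℤ) - 100) then cd 99 b ((k:ℤ) - 100) else 0) := by
        apply Finset.sum_congr rfl
        intro b _
        rw [Finset.sum_map]
        rfl
    _ = _ := by
        rw [Fintype.sum_bool, ← Finset.sum_add_distrib]
        apply Finset.sum_congr rfl
        intro k _
        split_ifs <;> simp [Nat.add_comm]

lemma getD_fst (k : ℕ) (hk : k < 201) :
    cd 99 false ((k:ℤ) - 100) = (stDP 99).1.getD k 0 := by
  rw [bridge 99 (by norm_num)]
  rw [List.getD_eq_getElem _ _ (by simpa using hk), List.getElem_map, List.getElem_range]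

lemma getD_snd (k : ℕ) (hk : k < 201) :
    cd 99 true ((k:ℤ) - 100) = (stDP 99).2.getD k 0 := by
  rw [bridge 99 (by norm_num)]
  rw [List.getD_eq_getElem _ _ (by simpa using hk), List.getElem_map, List.getElem_range]

lemma cardA : (Finset.univ.filter (fun w : Fin 100 → Bool =>
      cnt w true false < cnt w true true)).card
    = ∑ k ∈ Finset.range 100, ((stDP 99).1.getD k 0 + (stDP 99).2.getD k 0) := by
  have e1 : (Finset.univ.filter (fun w : Fin 100 → Bool =>
      cnt w true false < cnt w true true))
      = (Finset.univ.filter (fun w : Fin 100 → Bool => dval w < 0)) := by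
    apply Finset.filter_congr
    intro w _
    unfold dval
    omega
  rw [e1, card_filter_eq_sum (fun d => d < 0)]
  rw [← Finset.sum_filter]
  have e2 : (Finset.range 201).filter (fun k : ℕ => (k:ℤ) - 100 < 0) = Finset.range 100 := by
    ext k
    simp only [Finset.mem_filter, Finset.mem_range]
    omega
  rw [e2]
  apply Finset.sum_congr rfl
  intro k hk
  have hk' : k < 201 := by simp at hk; omega
  rw [getD_fst k hk', getD_snd k hk']

lemma cardB : (Finset.univ.filter (fun w : Fin 100 → Bool =>
      cnt w true true < cnt w true false)).card
    = ∑ k ∈ Finset.range 100, ((stDP 99).1.getD (101+k) 0 + (stDP 99).2.getD (101+k) 0) := by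
  have e1 : (Finset.univ.filter (fun w : Fin 100 → Bool =>
      cnt w true true < cnt w true false))
      = (Finset.univ.filter (fun w : Fin 100 → Bool => 0 < dval w)) := by
    apply Finset.filter_congr
    intro w _
    unfold dval
    omega
  rw [e1, card_filter_eq_sum (fun d => 0 < d)]
  rw [← Finset.sum_filter]
  have e2 : (Finset.range 201).filter (fun k : ℕ => 0 < (k:ℤ) - 100)
      = (Finset.range 100).map (addLeftEmbedding 101) := by
    ext k
    simp only [Finset.mem_filter, Finset.mem_range, Finset.mem_map, addLeftEmbedding_apply]
    constructor
    · rintro ⟨h1, h2⟩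
      exact ⟨k - 101, by omega, by omega⟩
    · rintro ⟨j, hj, rfl⟩
      constructor <;> omega
  rw [e2, Finset.sum_map]
  apply Finset.sum_congr rfl
  intro k hk
  simp only [addLeftEmbedding_apply]
  have hk' : 101 + k < 201 := by simp at hk; omega
  rw [getD_fst _ hk', getD_snd _ hk']

set_option maxRecDepth 100000 in
lemma final_lt : (∑ k ∈ Finset.range 100, ((stDP 99).1.getD k 0 + (stDP 99).2.getD k 0)) <
    (∑ k ∈ Finset.range 100, ((stDP 99).1.getD (101+k) 0 + (stDP 99).2.getD (101+k) 0)) := by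
  decide

end Aux

theorem stmt11 :
    (Finset.univ.filter (fun w : Fin 100 → Bool =>
        cnt w true false < cnt w true true)).card <
    (Finset.univ.filter (fun w : Fin 100 → Bool =>
        cnt w true true < cnt w true false)).card := by
  rw [cardA, cardB]
  exact final_lt
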